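/- Let n1, n2, n3, n4, m be nonnegative integers with n1 = n2 and m ≥ n1; let q = max(n1, n2, n3, n4, m) and let Q be the q×q shift matrix over 𝔽₂. Then for every pair of q×q matrices G_A, G_B over 𝔽₂, with G_S = Q^{q−n3} G_A Q^{q−n1} + Q^{q−n4} G_B Q^{q−n2} and G_M = Q^{q−n3} G_A Q^{q−m} + Q^{q−n4} G_B Q^{q−m}, one has rank(G_S) − dim(range(G_S) ∩ range(G_M)) = 0. -/

import Mathlib

/-- The `q × q` lower shift matrix over `𝔽₂`: entry `(i, j)` is `1` iff `i = j + 1`. -/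
def shiftQ (q : ℕ) : Matrix (Fin q) (Fin q) (ZMod 2) :=
  Matrix.of fun i j => if (i : ℕ) = (j : ℕ) + 1 then 1 else 0

/-- Source-to-destination transfer matrix
`G_S = Q^(q-n3) G_A Q^(q-n1) + Q^(q-n4) G_B Q^(q-n2)`. -/
def GSmat (q n1 n2 n3 n4 : ℕ) (GA GB : Matrix (Fin q) (Fin q) (ZMod 2)) :
    Matrix (Fin q) (Fin q) (ZMod 2) :=
  shiftQ q ^ (q - n3) * GA * shiftQ q ^ (q - n1) +
    shiftQ q ^ (q - n4) * GB * shiftQ q ^ (q - n2)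

/-- Interference transfer matrix
`G_M = Q^(q-n3) G_A Q^(q-m) + Q^(q-n4) G_B Q^(q-m)`. -/
def GMmat (q n3 n4 m : ℕ) (GA GB : Matrix (Fin q) (Fin q) (ZMod 2)) :
    Matrix (Fin q) (Fin q) (ZMod 2) :=
  shiftQ q ^ (q - n3) * GA * shiftQ q ^ (q - m) +
    shiftQ q ^ (q - n4) * GB * shiftQ q ^ (q - m)

/-- The achievable rate `rank G_S - dim (range G_S ∩ range G_M)` of a linear scheme. -/
noncomputable def linRate (q : ℕ) (GS GM : Matrix (Fin q) (Fin q) (ZMod 2)) : ℕ :=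
  GS.rank - Module.finrank (ZMod 2)
    ↥(LinearMap.range GS.mulVecLin ⊓ LinearMap.range GM.mulVecLin)

/-- Case `n1 = n2`, `m ≥ n1`: the achievable rate of every linear scheme is `0`. -/
theorem rate_zero_case5
    (n1 n2 n3 n4 m q : ℕ) (hq : q = max n1 (max n2 (max n3 (max n4 m))))
    (h12 : n1 = n2) (hm : n1 ≤ m)
    (GA GB : Matrix (Fin q) (Fin q) (ZMod 2)) :
    linRate q (GSmat q n1 n2 n3 n4 GA GB) (GMmat q n3 n4 m GA GB) = 0 := by
  subst h12
  have hmq : m ≤ q := by omega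
  have key : GSmat q n1 n1 n3 n4 GA GB =
      GMmat q n3 n4 m GA GB * shiftQ q ^ (m - n1) := by
    have hpow : shiftQ q ^ (q - n1) = shiftQ q ^ (q - m) * shiftQ q ^ (m - n1) := by
      rw [← pow_add]
      congr 1
      omega
    simp only [GSmat, GMmat, hpow, add_mul, mul_assoc]
  have hsub : LinearMap.range (GSmat q n1 n1 n3 n4 GA GB).mulVecLin ≤
      LinearMap.range (GMmat q n3 n4 m GA GB).mulVecLin := by
    rw [key, Matrix.mulVecLin_mul]
    exact LinearMap.range_comp_le_range _ _
  have hinf : LinearMap.range (GSmat q n1 n1 n3 n4 GA GB).mulVecLin ⊓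
      LinearMap.range (GMmat q n3 n4 m GA GB).mulVecLin =
      LinearMap.range (GSmat q n1 n1 n3 n4 GA GB).mulVecLin := inf_eq_left.mpr hsub
  have hfr := congrArg (fun S : Submodule (ZMod 2) (Fin q → ZMod 2) => Module.finrank (ZMod 2) S) hinf
  simp only [linRate, Matrix.rank]
  omega
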